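/- Let M ∈ ℝ^{K×K} be a matrix, and let b_1 < b_2 < … < b_T be the distinct entries of M. Suppose there exists a function f : ℝ → ℝ such that det(f(M)) ≠ 0, where f(M) denotes entrywise application. Let ε = (1/4)·min_{i>1}(b_i − b_{i−1}). Then there exist c_i ∈ [b_i − ε, b_i + ε] for each i such that every function h : ℝ → ℝ with h(b_i) = c_i for all i satisfies det(h(M)) ≠ 0. -/

import Mathlib

open Polynomial

theorem existence_of_perturbed_values (K T : ℕ) (hT : 0 < T)
    (M : Matrix (Fin K) (Fin K) ℝ)
    (b : Fin (T + 1) → ℝ) (hb : StrictMono b)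
    (hentries : ∀ i j, ∃ t, M i j = b t)
    (hsurj : ∀ t, ∃ i j, M i j = b t)
    (f : ℝ → ℝ) (hf : (M.map f).det ≠ 0)
    (ε : ℝ)
    (hε : ε = (1 / 4) *
      Finset.univ.inf' (Finset.univ_nonempty_iff.mpr ⟨⟨0, hT⟩⟩)
        (fun i : Fin T => b i.succ - b i.castSucc)) :
    ∃ c : Fin (T + 1) → ℝ,
      (∀ t, c t ∈ Set.Icc (b t - ε) (b t + ε)) ∧
      ∀ h : ℝ → ℝ, (∀ t, h (b t) = c t) → (M.map h).det ≠ 0 := by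
  -- ε > 0
  have hεpos : 0 < ε := by
    rw [hε]
    have : (0:ℝ) < Finset.univ.inf' (Finset.univ_nonempty_iff.mpr ⟨⟨0, hT⟩⟩)
        (fun i : Fin T => b i.succ - b i.castSucc) := by
      rw [Finset.lt_inf'_iff]
      intro i _
      have := hb (Fin.castSucc_lt_succ : i.castSucc < i.succ)
      linarith
    linarith
  -- the polynomial
  set Pmat : Matrix (Fin K) (Fin K) ℝ[X] :=
    Matrix.of fun i j => C (M i j) + C (f (M i j) - M i j) * X with hPmat
  set P : ℝ[X] := Pmat.det with hP
  have heval : ∀ l : ℝ, P.eval l = (M.map (fun x => x + l * (f x - x))).det := by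
    intro l
    have := RingHom.map_det (evalRingHom l) Pmat
    simp only [coe_evalRingHom] at this
    rw [hP, this]
    congr 1
    ext i j
    simp [hPmat, Matrix.map_apply]
    ring
  have hP1 : P.eval 1 ≠ 0 := by
    rw [heval]
    have : (M.map fun x => x + 1 * (f x - x)) = M.map f := by
      ext i j; simp [Matrix.map_apply]
    rwa [this]
  have hPne : P ≠ 0 := fun h => hP1 (by simp [h])
  -- bound on perturbation size
  set A : ℝ := Finset.univ.sup' (Finset.univ_nonempty_iff.mpr ⟨0⟩)
    (fun t : Fin (T + 1) => |f (b t) - b t|) with hA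
  have hA0 : 0 ≤ A := le_trans (abs_nonneg _)
    (Finset.le_sup' (fun t : Fin (T + 1) => |f (b t) - b t|) (Finset.mem_univ 0))
  set δ : ℝ := ε / (A + 1) with hδ
  have hδpos : 0 < δ := div_pos hεpos (by linarith)
  -- pick a small nonroot λ
  have hroots : {x : ℝ | P.IsRoot x}.Finite := Polynomial.finite_setOf_isRoot hPne
  have hinf : (Set.Ioc 0 δ \ {x : ℝ | P.IsRoot x}).Infinite :=
    (Set.Ioc_infinite hδpos).diff hroots
  obtain ⟨l, hl⟩ := hinf.nonempty
  obtain ⟨⟨hl0, hlδ⟩, hlnr⟩ := hl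
  have hlA : ∀ t, |l * (f (b t) - b t)| ≤ ε := by
    intro t
    rw [abs_mul, abs_of_pos hl0]
    have h1 : |f (b t) - b t| ≤ A :=
      Finset.le_sup' (fun t : Fin (T + 1) => |f (b t) - b t|) (Finset.mem_univ t)
    calc l * |f (b t) - b t| ≤ δ * A := by
          apply mul_le_mul hlδ h1 (abs_nonneg _) (le_of_lt hδpos)
      _ ≤ ε := by
          rw [hδ, div_mul_eq_mul_div, div_le_iff₀ (by linarith : (0:ℝ) < A + 1)]
          nlinarith
  refine ⟨fun t => b t + l * (f (b t) - b t), ?_, ?_⟩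
  · intro t
    have := hlA t
    rw [abs_le] at this
    dsimp only
    constructor <;> linarith [this.1, this.2]
  · intro h hh
    have : M.map h = M.map (fun x => x + l * (f x - x)) := by
      ext i j
      obtain ⟨t, ht⟩ := hentries i j
      simp only [Matrix.map_apply, ht, hh t]
    rw [this, ← heval]
    exact fun hc => hlnr (by simpa [Polynomial.IsRoot] using hc)
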